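/- Let H₁, H₂, H₃ be positive functions with H₁² + H₂² - H₃² = 0, let h₁, h₂, h₃ satisfy h_i = h_k + ε_j H_j/(H_iH_k) and h_j = h_k - ε_i H_i/(H_jH_k) for each cyclic permutation (i,j,k) of (1,2,3), with (ε₁,ε₂,ε₃)=(1,1,-1). Define Ĥᵢ := hᵢHᵢ and Hᵢ* := (-hᵢ² + εᵢ/Hᵢ²)Hᵢ. Then for all cyclic (i,j,k): Hᵢ*Ĥⱼ - Hⱼ*Ĥᵢ = -ε_k H_k*. Consequently the dual system satisfies the characterization of Guichard nets (with respect to the Combescure transform given by -h₁,-h₂,-h₃), i.e. H₁*² + H₂*² - H₃*² = 0. -/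
import Mathlib


set_option maxHeartbeats 1000000 in
lemma key (A B C a b c : ℝ) (hA : 0 < A) (hB : 0 < B) (hC : 0 < C)
    (hG : A^2 + B^2 - C^2 = 0)
    (r1 : a - c = B / (A*C)) (r2 : b - c = -(A/(B*C))) :
    ((-(a^2)+1/A^2)*A) * (b*B) - ((-(b^2)+1/B^2)*B) * (a*A) = (-(c^2)+(-1)/C^2)*C
    ∧ ((-(b^2)+1/B^2)*B) * (c*C) - ((-(c^2)+(-1)/C^2)*C) * (b*B) = -(((-(a^2)+1/A^2)*A))
    ∧ ((-(c^2)+(-1)/C^2)*C) * (a*A) - ((-(a^2)+1/A^2)*A) * (c*C) = -(((-(b^2)+1/B^2)*B))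
    ∧ ((-(a^2)+1/A^2)*A)^2 + ((-(b^2)+1/B^2)*B)^2 - ((-(c^2)+(-1)/C^2)*C)^2 = 0 := by
  have hA' := hA.ne'
  have hB' := hB.ne'
  have hC' := hC.ne'
  have ha : a = c + B/(A*C) := by linarith
  have hb : b = c - A/(B*C) := by linarith
  subst ha hb
  refine ⟨?_, ?_, ?_, ?_⟩
  · linear_combination (norm := (field_simp; ring))
      (-(c*B/(A*C^2)) + 1/C^3 - c^2/C + c*A/(B*C^2)) * hG
  · linear_combination (norm := (field_simp; ring))
      (-(1/(A*C^2)) - c/(B*C)) * hG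
  · linear_combination (norm := (field_simp; ring))
      (c/(A*C) - 1/(B*C^2)) * hG
  · linear_combination (norm := (field_simp; ring))
      (-(1/(A^2*C^2)) + B^2/(A^2*C^4) + 4*B*c/(A*C^3) - 1/(B^2*C^2) - 1/C^4
        + 6*c^2/C^2 + c^4 - 4*A*c/(B*C^3) + A^2/(B^2*C^4)) * hG

/-- the dual system of a Guichard net is again a Guichard net. -/
theorem stmt_12 (H₁ H₂ H₃ h₁ h₂ h₃ : EuclideanSpace ℝ (Fin 3) → ℝ)
    (hpos : ∀ p, 0 < H₁ p ∧ 0 < H₂ p ∧ 0 < H₃ p)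
    (hGuichard : ∀ p, H₁ p ^ 2 + H₂ p ^ 2 - H₃ p ^ 2 = 0)
    (r₁ : ∀ p, h₁ p - h₃ p = H₂ p / (H₁ p * H₃ p))
    (r₂ : ∀ p, h₂ p - h₃ p = -(H₁ p / (H₂ p * H₃ p)))
    (r₃ : ∀ p, h₂ p - h₁ p = -(H₃ p / (H₁ p * H₂ p)))
    (Hh₁ Hh₂ Hh₃ Hs₁ Hs₂ Hs₃ : EuclideanSpace ℝ (Fin 3) → ℝ)
    (e₁ : ∀ p, Hh₁ p = h₁ p * H₁ p) (e₂ : ∀ p, Hh₂ p = h₂ p * H₂ p)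
    (e₃ : ∀ p, Hh₃ p = h₃ p * H₃ p)
    (s₁ : ∀ p, Hs₁ p = (-(h₁ p ^ 2) + 1 / H₁ p ^ 2) * H₁ p)
    (s₂ : ∀ p, Hs₂ p = (-(h₂ p ^ 2) + 1 / H₂ p ^ 2) * H₂ p)
    (s₃ : ∀ p, Hs₃ p = (-(h₃ p ^ 2) + (-1) / H₃ p ^ 2) * H₃ p) :
    ∀ p,
      Hs₁ p * Hh₂ p - Hs₂ p * Hh₁ p = Hs₃ p
      ∧ Hs₂ p * Hh₃ p - Hs₃ p * Hh₂ p = -(Hs₁ p)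
      ∧ Hs₃ p * Hh₁ p - Hs₁ p * Hh₃ p = -(Hs₂ p)
      ∧ Hs₁ p ^ 2 + Hs₂ p ^ 2 - Hs₃ p ^ 2 = 0 := by
  intro p
  obtain ⟨hA, hB, hC⟩ := hpos p
  obtain ⟨k1, k2, k3, k4⟩ := key (H₁ p) (H₂ p) (H₃ p) (h₁ p) (h₂ p) (h₃ p)
    hA hB hC (hGuichard p) (r₁ p) (r₂ p)
  rw [e₁ p, e₂ p, e₃ p, s₁ p, s₂ p, s₃ p]
  exact ⟨k1, k2, k3, k4⟩
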